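/- Let (Θ, 𝔉) be a measurable space, μ a probability measure on Θ, and g : Θ → ℝ a measurable function. Let K ≥ 1 be a natural number and ε ∈ (0, 1] a real number. Then the μ^K-measure of the set of sample vectors ω = (ω₁, …, ω_K) ∈ Θ^K for which μ({θ ∈ Θ : g(θ) > max_{1≤i≤K} g(ω_i)}) > ε is at most (1 − ε)^K. -/

import Mathlib

open MeasureTheory
open scoped ENNReal

/-- Quantitative core of the scenario optimization guarantee: the probability (over `K`
i.i.d. samples from `μ`) that the violation probability of the empirical maximum
`λ* = max_{1≤i≤K} g(ωᵢ)` exceeds `ε` is at most `(1 - ε)^K`. -/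
theorem scenario_violation_bound
    {Θ : Type*} [MeasurableSpace Θ] (μ : Measure Θ) [IsProbabilityMeasure μ]
    (g : Θ → ℝ) (hg : Measurable g)
    (K : ℕ) (hK : 1 ≤ K) (ε : ℝ) (hε : ε ∈ Set.Ioc (0 : ℝ) 1) :
    (Measure.pi fun _ : Fin K => μ)
      {ω : Fin K → Θ |
        μ {θ : Θ | g θ > ⨆ i : Fin K, g (ω i)} > ENNReal.ofReal ε}
      ≤ ENNReal.ofReal ((1 - ε) ^ K) := by
  obtain ⟨hε0, hε1⟩ := hε
  set ε' : ℝ≥0∞ := ENNReal.ofReal ε with hε'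
  have hε'pos : 0 < ε' := ENNReal.ofReal_pos.2 hε0
  set F : ℝ → ℝ≥0∞ := fun t => μ {θ | t < g θ} with hF
  have hFmeas : ∀ t : ℝ, MeasurableSet {θ | t < g θ} := fun t => hg measurableSet_Ioi
  have hFanti : Antitone F := fun s t hst =>
    measure_mono (fun θ hθ => lt_of_le_of_lt hst hθ)
  by_cases hall : ∀ t, F t ≤ ε'
  · have hempty : {ω : Fin K → Θ |
        μ {θ : Θ | g θ > ⨆ i : Fin K, g (ω i)} > ENNReal.ofReal ε} = ∅ := by
      ext ω
      simp only [Set.mem_setOf_eq, Set.mem_empty_iff_false, iff_false, not_lt]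
      exact hall _
    rw [hempty, measure_empty]
    exact zero_le
  push_neg at hall
  obtain ⟨t₁, ht₁⟩ := hall
  set S : Set ℝ := {t | F t ≤ ε'} with hS
  -- S is nonempty since F tends to 0 at infinity
  have hempty : ⋂ n : ℕ, {θ | (n : ℝ) < g θ} = ∅ := by
    ext θ
    simp only [Set.mem_iInter, Set.mem_setOf_eq, Set.mem_empty_iff_false, iff_false,
      not_forall, not_lt]
    obtain ⟨n, hn⟩ := exists_nat_gt (g θ)
    exact ⟨n, hn.le⟩
  have htend : Filter.Tendsto (fun n : ℕ => F n) Filter.atTop (nhds 0) := by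
    have h := tendsto_measure_iInter_atTop (μ := μ) (s := fun n : ℕ => {θ | (n : ℝ) < g θ})
      (fun n => (hFmeas _).nullMeasurableSet)
      (fun n m hnm θ hθ => lt_of_le_of_lt (show (n:ℝ) ≤ m by exact_mod_cast hnm) hθ)
      ⟨0, measure_ne_top μ _⟩
    rw [hempty, measure_empty] at h
    exact h
  have hSne : S.Nonempty := by
    have h := htend.eventually (gt_mem_nhds hε'pos)
    obtain ⟨n, hn⟩ := h.exists
    exact ⟨n, hn.le⟩
  have hSbdd : BddBelow S := by
    refine ⟨t₁, fun s hs => ?_⟩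
    by_contra h
    push_neg at h
    exact absurd (le_trans (hFanti h.le) hs) (not_le.2 ht₁)
  set t₀ : ℝ := sInf S with ht₀
  have hinv_anti : ∀ n m : ℕ, n ≤ m → ((m:ℝ)+1)⁻¹ ≤ ((n:ℝ)+1)⁻¹ := by
    intro n m hnm
    have : (n:ℝ) ≤ m := Nat.cast_le.2 hnm
    apply inv_anti₀ <;> linarith
  -- right continuity: F t₀ ≤ ε'
  have hFt₀ : F t₀ ≤ ε' := by
    have hUnion : {θ | t₀ < g θ} = ⋃ n : ℕ, {θ | t₀ + ((n : ℝ) + 1)⁻¹ < g θ} := by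
      ext θ
      simp only [Set.mem_setOf_eq, Set.mem_iUnion]
      constructor
      · intro h
        obtain ⟨n, hn⟩ := exists_nat_one_div_lt (sub_pos.2 h)
        rw [one_div] at hn
        exact ⟨n, by linarith⟩
      · rintro ⟨n, hn⟩
        have : (0:ℝ) < ((n:ℝ)+1)⁻¹ := by positivity
        linarith
    show μ {θ | t₀ < g θ} ≤ ε'
    rw [hUnion]
    refine le_of_tendsto' (tendsto_measure_iUnion_atTop
      (fun n m hnm θ hθ => by
        simp only [Set.mem_setOf_eq] at hθ ⊢
        have := hinv_anti n m hnm
        linarith))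
      (fun n => ?_)
    obtain ⟨s, hsS, hs⟩ := exists_lt_of_csInf_lt hSne
      (show sInf S < t₀ + ((n:ℝ)+1)⁻¹ by
        have : (0:ℝ) < ((n:ℝ)+1)⁻¹ := by positivity
        rw [← ht₀]; linarith)
    exact le_trans (hFanti hs.le) hsS
  -- left limit: ε' ≤ μ {t₀ ≤ g}
  have hleft : ε' ≤ μ {θ | t₀ ≤ g θ} := by
    have hInter : {θ | t₀ ≤ g θ} = ⋂ n : ℕ, {θ | t₀ - ((n : ℝ) + 1)⁻¹ < g θ} := by
      ext θ
      simp only [Set.mem_setOf_eq, Set.mem_iInter]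
      constructor
      · intro h n
        have : (0:ℝ) < ((n:ℝ)+1)⁻¹ := by positivity
        linarith
      · intro h
        by_contra hc
        push_neg at hc
        obtain ⟨n, hn⟩ := exists_nat_one_div_lt (sub_pos.2 hc)
        rw [one_div] at hn
        have := h n
        linarith
    rw [hInter]
    have htendI := tendsto_measure_iInter_atTop (μ := μ)
      (s := fun n : ℕ => {θ | t₀ - ((n : ℝ) + 1)⁻¹ < g θ})
      (fun n => (hFmeas _).nullMeasurableSet)
      (fun n m hnm θ hθ => by
        simp only [Set.mem_setOf_eq] at hθ ⊢
        have := hinv_anti n m hnm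
        linarith)
      ⟨0, measure_ne_top μ _⟩
    refine ge_of_tendsto' htendI (fun n => ?_)
    have hnot : t₀ - ((n:ℝ)+1)⁻¹ ∉ S := by
      intro hmem
      have : t₀ ≤ t₀ - ((n:ℝ)+1)⁻¹ := csInf_le hSbdd hmem
      have h2 : (0:ℝ) < ((n:ℝ)+1)⁻¹ := by positivity
      linarith
    have : ε' < F (t₀ - ((n:ℝ)+1)⁻¹) := not_le.1 hnot
    exact this.le
  -- the bad set is contained in the product of copies of {g < t₀}
  set T : Set Θ := {θ | g θ < t₀} with hT
  have hsub : {ω : Fin K → Θ |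
      μ {θ : Θ | g θ > ⨆ i : Fin K, g (ω i)} > ENNReal.ofReal ε}
      ⊆ Set.pi Set.univ (fun _ : Fin K => T) := by
    intro ω hω i _
    simp only [Set.mem_setOf_eq] at hω
    by_contra hc
    have hti : t₀ ≤ g (ω i) := not_lt.1 hc
    have h1 : F (g (ω i)) ≤ ε' := le_trans (hFanti hti) hFt₀
    have : Nonempty (Fin K) := Fin.pos_iff_nonempty.1 hK
    have h2 : g (ω i) ≤ ⨆ j : Fin K, g (ω j) :=
      le_ciSup (f := fun j : Fin K => g (ω j))
        (Set.Finite.bddAbove (Set.finite_range _)) i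
    have h3 : F (⨆ j : Fin K, g (ω j)) ≤ ε' := le_trans (hFanti h2) h1
    exact absurd hω (not_lt.2 h3)
  have hTmeas : MeasurableSet T := hg measurableSet_Iio
  have hμT : μ T ≤ ENNReal.ofReal (1 - ε) := by
    have hcompl : T = {θ | t₀ ≤ g θ}ᶜ := by
      ext θ; simp [hT, not_le]
    rw [hcompl, measure_compl (measurableSet_le measurable_const hg) (measure_ne_top μ _),
      measure_univ]
    calc 1 - μ {θ | t₀ ≤ g θ} ≤ 1 - ε' := tsub_le_tsub_left hleft 1
      _ = ENNReal.ofReal (1 - ε) := by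
          rw [hε', ← ENNReal.ofReal_one, ← ENNReal.ofReal_sub _ hε0.le]
  refine le_trans (measure_mono hsub) ?_
  rw [Measure.pi_pi]
  rw [Finset.prod_const, Finset.card_univ, Fintype.card_fin]
  calc (μ T) ^ K ≤ (ENNReal.ofReal (1 - ε)) ^ K := pow_le_pow_left₀ zero_le hμT K
    _ = ENNReal.ofReal ((1 - ε) ^ K) := (ENNReal.ofReal_pow (by linarith) K).symm
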